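/- (Squeezing lemma, vector case) Suppose C ≥ 0 is such that for every C¹ vector field q̂ : ℝ² → ℝ² whose fluxes across the edges of K̂ from (0,0) to (0,1) and from (0,0) to (1,0) both vanish, one has ∫_{K̂} |q̂|² dx ≤ C² ∫_{K̂} |∇q̂|_F² dx. Then for all α, β > 0 and every C¹ vector field q : ℝ² → ℝ² whose fluxes across the edges of K_{αβ} from (0,0) to (0,β) and from (0,0) to (α,0) both vanish, one has ∫_{K_{αβ}} |q|² dx ≤ (max{α, β})² C² ∫_{K_{αβ}} |∇q|_F² dx, where K_{αβ} is the triangle with vertices (0,0), (α,0), (0,β). -/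

import Mathlib

open MeasureTheory

noncomputable section

abbrev E2 : Type := EuclideanSpace ℝ (Fin 2)

/-- The point (a, b) in the Euclidean plane. -/
def pt (a b : ℝ) : E2 := WithLp.toLp 2 ![a, b]

/-- First standard basis vector. -/
def vex : E2 := pt 1 0
/-- Second standard basis vector. -/
def vey : E2 := pt 0 1

/-- Euclidean dot product on the plane. -/
def dot2 (v w : E2) : ℝ := v 0 * w 0 + v 1 * w 1

/-- rot (w₁, w₂) = (w₂, −w₁). -/
def rot (w : E2) : E2 := pt (w 1) (-(w 0))

/-- Flux of a vector field across the (oriented) segment from `a` to `b`: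
∫₀¹ q(a + t(b − a)) · rot(b − a) dt, the line integral of the normal component. -/
def flux (q : E2 → E2) (a b : E2) : ℝ :=
  ∫ t in (0:ℝ)..1, dot2 (q (a + t • (b - a))) (rot (b - a))

/-- Squared Euclidean norm of the gradient of a scalar function. -/
def gradSq (v : E2 → ℝ) (x : E2) : ℝ :=
  (fderiv ℝ v x vex) ^ 2 + (fderiv ℝ v x vey) ^ 2

/-- Gradient vector of a scalar function. -/
def gradVec (v : E2 → ℝ) (x : E2) : E2 :=
  pt (fderiv ℝ v x vex) (fderiv ℝ v x vey)

/-- Squared Frobenius norm of the Jacobian of a vector field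
(sum of squares of the four first-order partial derivatives). -/
def frobSq (q : E2 → E2) (x : E2) : ℝ :=
  (fderiv ℝ q x vex 0) ^ 2 + (fderiv ℝ q x vey 0) ^ 2 +
  (fderiv ℝ q x vex 1) ^ 2 + (fderiv ℝ q x vey 1) ^ 2

/-- Divergence of a planar vector field. -/
def divg (q : E2 → E2) (x : E2) : ℝ := fderiv ℝ q x vex 0 + fderiv ℝ q x vey 1

/-- The reference triangle with vertices (0,0), (1,0), (0,1). -/
def Khat : Set E2 := convexHull ℝ {pt 0 0, pt 1 0, pt 0 1}

/-- The triangle with vertices (0,0), (α,0), (0,β). -/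
def Kab (a b : ℝ) : Set E2 := convexHull ℝ {pt 0 0, pt a 0, pt 0 b}

/-- Matrix–vector multiplication for 2×2 matrices acting on the plane. -/
def matVec (A : Matrix (Fin 2) (Fin 2) ℝ) (x : E2) : E2 :=
  pt (A 0 0 * x 0 + A 0 1 * x 1) (A 1 0 * x 0 + A 1 1 * x 1)

/-- Squared Frobenius norm of a 2×2 matrix. -/
def mFrobSq (M : Matrix (Fin 2) (Fin 2) ℝ) : ℝ :=
  M 0 0 ^ 2 + M 0 1 ^ 2 + M 1 0 ^ 2 + M 1 1 ^ 2

/-! ### Auxiliary material -/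

lemma pt_app0 (a b : ℝ) : pt a b 0 = a := rfl
lemma pt_app1 (a b : ℝ) : pt a b 1 = b := rfl
lemma pt_add (a b c d : ℝ) : pt a b + pt c d = pt (a+c) (b+d) := by
  ext i; fin_cases i <;> simp [pt]
lemma pt_sub (a b c d : ℝ) : pt a b - pt c d = pt (a-c) (b-d) := by
  ext i; fin_cases i <;> simp [pt]
lemma pt_smul (t a b : ℝ) : t • pt a b = pt (t*a) (t*b) := by
  ext i; fin_cases i <;> simp [pt]

def Smap (α β : ℝ) : E2 →L[ℝ] E2 :=
  LinearMap.toContinuousLinearMap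
  { toFun := fun x => pt (α * x 0) (β * x 1)
    map_add' := by intro x y; ext i; fin_cases i <;> simp [pt] <;> ring
    map_smul' := by intro c x; ext i; fin_cases i <;> simp [pt] <;> ring }

lemma Smap_apply (α β : ℝ) (x : E2) : Smap α β x = pt (α * x 0) (β * x 1) := rfl

lemma Smap_det (α β : ℝ) : (Smap α β).det = α * β := by
  have : LinearMap.det ((Smap α β) : E2 →ₗ[ℝ] E2) = α * β := by
    rw [← LinearMap.det_toMatrix (PiLp.basisFun 2 ℝ (Fin 2))]
    rw [Matrix.det_fin_two]
    simp [LinearMap.toMatrix_apply, PiLp.basisFun_repr, PiLp.basisFun_apply,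
      Smap_apply, pt, Pi.single_apply]
  exact this

lemma Smap_inj {α β : ℝ} (hα : α ≠ 0) (hβ : β ≠ 0) :
    Function.Injective (Smap α β) := by
  intro x y h
  ext i
  have h0 := congrArg (fun v : E2 => v 0) h
  have h1 := congrArg (fun v : E2 => v 1) h
  simp only [Smap_apply, pt_app0, pt_app1] at h0 h1
  fin_cases i
  · exact mul_left_cancel₀ hα h0
  · exact mul_left_cancel₀ hβ h1

lemma Khat_compact : IsCompact Khat := by
  have : ({pt 0 0, pt 1 0, pt 0 1} : Set E2).Finite :=
    (Set.finite_singleton _).insert _ |>.insert _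
  exact this.isCompact_convexHull ℝ

lemma Khat_meas : MeasurableSet Khat := Khat_compact.isClosed.measurableSet

lemma Smap_image_Khat {α β : ℝ} : Smap α β '' Khat = Kab α β := by
  unfold Khat Kab
  rw [show (Smap α β : E2 → E2) = ((Smap α β : E2 →ₗ[ℝ] E2) : E2 → E2) from rfl]
  rw [LinearMap.image_convexHull]
  congr 1
  rw [Set.image_insert_eq, Set.image_insert_eq, Set.image_singleton]
  have e0 : (Smap α β : E2 →ₗ[ℝ] E2) (pt 0 0) = pt 0 0 := by
    show Smap α β (pt 0 0) = pt 0 0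
    rw [Smap_apply]; norm_num [pt_app0, pt_app1]
  have e1 : (Smap α β : E2 →ₗ[ℝ] E2) (pt 1 0) = pt α 0 := by
    show Smap α β (pt 1 0) = pt α 0
    rw [Smap_apply]; norm_num [pt_app0, pt_app1]
  have e2 : (Smap α β : E2 →ₗ[ℝ] E2) (pt 0 1) = pt 0 β := by
    show Smap α β (pt 0 1) = pt 0 β
    rw [Smap_apply]; norm_num [pt_app0, pt_app1]
  rw [e0, e1, e2]


lemma chg {α β : ℝ} (hα : 0 < α) (hβ : 0 < β) (g : E2 → ℝ) :
    ∫ x in Kab α β, g x = (α*β) * ∫ x in Khat, g (Smap α β x) := by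
  rw [← Smap_image_Khat (α := α) (β := β)]
  rw [integral_image_eq_integral_abs_det_fderiv_smul volume Khat_meas
      (fun x _ => (Smap α β).hasFDerivAt.hasFDerivWithinAt)
      ((Smap_inj hα.ne' hβ.ne').injOn) g]
  simp only [Smap_det, smul_eq_mul, abs_of_pos (mul_pos hα hβ)]
  exact integral_const_mul _ _

lemma fderiv_comp_Smap {α β : ℝ} {q : E2 → E2} (hq : ContDiff ℝ 1 q) (x : E2) :
    fderiv ℝ (fun y => q (Smap α β y)) x = (fderiv ℝ q (Smap α β x)).comp (Smap α β) :=
  ((hq.differentiable one_ne_zero _).hasFDerivAt.comp x (Smap α β).hasFDerivAt).fderiv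

lemma smul_app (c : ℝ) (w : E2) (i : Fin 2) : (c • w) i = c * w i := rfl

lemma Smap_vex (α β : ℝ) : Smap α β vex = α • vex := by
  ext i; fin_cases i <;> simp [Smap_apply, vex, pt, smul_app]

lemma Smap_vey (α β : ℝ) : Smap α β vey = β • vey := by
  ext i; fin_cases i <;> simp [Smap_apply, vey, pt, smul_app]

lemma frob_bound {α β : ℝ} (hα : 0 < α) (hβ : 0 < β) {q : E2 → E2}
    (hq : ContDiff ℝ 1 q) (x : E2) :
    frobSq (fun y => q (Smap α β y)) x ≤ (max α β)^2 * frobSq q (Smap α β x) := by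
  unfold frobSq
  rw [fderiv_comp_Smap hq x]
  simp only [ContinuousLinearMap.comp_apply, Smap_vex, Smap_vey, _root_.map_smul, smul_app]
  set a := fderiv ℝ q (Smap α β x) vex 0
  set b := fderiv ℝ q (Smap α β x) vey 0
  set c := fderiv ℝ q (Smap α β x) vex 1
  set d := fderiv ℝ q (Smap α β x) vey 1
  have h1 : α ≤ max α β := le_max_left _ _
  have h2 : β ≤ max α β := le_max_right _ _
  have hA : α^2 ≤ (max α β)^2 := pow_le_pow_left₀ hα.le h1 2
  have hB : β^2 ≤ (max α β)^2 := pow_le_pow_left₀ hβ.le h2 2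
  nlinarith [mul_le_mul_of_nonneg_right hA (sq_nonneg a),
    mul_le_mul_of_nonneg_right hB (sq_nonneg b),
    mul_le_mul_of_nonneg_right hA (sq_nonneg c),
    mul_le_mul_of_nonneg_right hB (sq_nonneg d)]

lemma cont_pd {q : E2 → E2} (hq : ContDiff ℝ 1 q) (v : E2) (i : Fin 2) :
    Continuous fun x => fderiv ℝ q x v i := by
  have h : Continuous (fderiv ℝ q) := hq.continuous_fderiv one_ne_zero
  have h2 : Continuous fun x => fderiv ℝ q x v :=
    (ContinuousLinearMap.apply ℝ E2 v).continuous.comp h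
  exact (continuous_apply i).comp ((PiLp.continuous_ofLp 2 _).comp h2)

lemma cont_frobSq {q : E2 → E2} (hq : ContDiff ℝ 1 q) : Continuous (frobSq q) := by
  unfold frobSq
  exact ((((cont_pd hq vex 0).pow 2).add ((cont_pd hq vey 0).pow 2)).add
    ((cont_pd hq vex 1).pow 2)).add ((cont_pd hq vey 1).pow 2)

/-- Squeezing lemma, vector case: the constant `C` of the Babuška–Aziz-type
inequality for vector fields with vanishing fluxes across the two legs of the
reference triangle yields the constant `max{α,β} C` on the squeezed triangle
`K_{αβ}`. -/
theorem stmt10 (C : ℝ) (hC : 0 ≤ C)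
    (href : ∀ q : E2 → E2, ContDiff ℝ 1 q →
      flux q (pt 0 0) (pt 0 1) = 0 → flux q (pt 0 0) (pt 1 0) = 0 →
      (∫ x in Khat, dot2 (q x) (q x)) ≤ C ^ 2 * ∫ x in Khat, frobSq q x) :
    ∀ α β : ℝ, 0 < α → 0 < β →
      ∀ q : E2 → E2, ContDiff ℝ 1 q →
        flux q (pt 0 0) (pt 0 β) = 0 → flux q (pt 0 0) (pt α 0) = 0 →
        (∫ x in Kab α β, dot2 (q x) (q x)) ≤
          (max α β) ^ 2 * C ^ 2 * ∫ x in Kab α β, frobSq q x := by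
  intro α β hα hβ q hq hf1 hf2
  have hqhC : ContDiff ℝ 1 (fun y => q (Smap α β y)) := hq.comp (Smap α β).contDiff
  have hflux1 : flux (fun y => q (Smap α β y)) (pt 0 0) (pt 0 1) = 0 := by
    have key : flux q (pt 0 0) (pt 0 β) =
        β * flux (fun y => q (Smap α β y)) (pt 0 0) (pt 0 1) := by
      unfold flux
      rw [← intervalIntegral.integral_const_mul]
      apply intervalIntegral.integral_congr
      intro t ht
      simp only [Smap_apply, pt_sub, pt_add, pt_smul, pt_app0, pt_app1, rot, dot2,
        sub_zero, sub_self, zero_add, add_zero, mul_zero, zero_mul, mul_one, one_mul,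
        neg_zero, mul_comm]
      try ring
    rw [key] at hf1
    exact (mul_eq_zero.mp hf1).resolve_left hβ.ne'
  have hflux2 : flux (fun y => q (Smap α β y)) (pt 0 0) (pt 1 0) = 0 := by
    have key : flux q (pt 0 0) (pt α 0) =
        α * flux (fun y => q (Smap α β y)) (pt 0 0) (pt 1 0) := by
      unfold flux
      rw [← intervalIntegral.integral_const_mul]
      apply intervalIntegral.integral_congr
      intro t ht
      simp only [Smap_apply, pt_sub, pt_add, pt_smul, pt_app0, pt_app1, rot, dot2,
        sub_zero, sub_self, zero_add, add_zero, mul_zero, zero_mul, mul_one, one_mul,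
        neg_zero, mul_comm]
      try ring
    rw [key] at hf2
    exact (mul_eq_zero.mp hf2).resolve_left hα.ne'
  have h1 : (∫ x in Khat, dot2 (q (Smap α β x)) (q (Smap α β x)))
      ≤ C^2 * ∫ x in Khat, frobSq (fun y => q (Smap α β y)) x :=
    href _ hqhC hflux1 hflux2
  have hmono : (∫ x in Khat, frobSq (fun y => q (Smap α β y)) x)
      ≤ (max α β)^2 * ∫ x in Khat, frobSq q (Smap α β x) := by
    rw [← integral_const_mul]
    apply setIntegral_mono_on
    · exact ((cont_frobSq hqhC).continuousOn).integrableOn_compact Khat_compact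
    · exact ((continuous_const.mul
        ((cont_frobSq hq).comp (Smap α β).continuous)).continuousOn).integrableOn_compact
        Khat_compact
    · exact Khat_meas
    · intro x _
      exact frob_bound hα hβ hq x
  have hchg1 : (∫ x in Kab α β, dot2 (q x) (q x))
      = (α*β) * ∫ x in Khat, dot2 (q (Smap α β x)) (q (Smap α β x)) := chg hα hβ _
  have hchg2 : (∫ x in Kab α β, frobSq q x)
      = (α*β) * ∫ x in Khat, frobSq q (Smap α β x) := chg hα hβ _
  rw [hchg1, hchg2]
  have h2 : C^2 * (∫ x in Khat, frobSq (fun y => q (Smap α β y)) x)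
      ≤ C^2 * ((max α β)^2 * ∫ x in Khat, frobSq q (Smap α β x)) :=
    mul_le_mul_of_nonneg_left hmono (sq_nonneg C)
  calc (α*β) * ∫ x in Khat, dot2 (q (Smap α β x)) (q (Smap α β x))
      ≤ (α*β) * (C^2 * ((max α β)^2 * ∫ x in Khat, frobSq q (Smap α β x))) :=
        mul_le_mul_of_nonneg_left (h1.trans h2) (mul_pos hα hβ).le
    _ = (max α β)^2 * C^2 * ((α*β) * ∫ x in Khat, frobSq q (Smap α β x)) := by ring


end
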